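/- (Jordan's theorem) For every natural number n there exists a constant C = Jor_n such that every finite subgroup G of GL(n, ℝ) contains an abelian subgroup A with index [G : A] ≤ C. -/

import Mathlib

set_option linter.unusedSectionVars false
set_option maxHeartbeats 1000000
set_option synthInstance.maxHeartbeats 400000

open scoped RealInnerProductSpace
open scoped commutatorElement

section JordanCore

variable {R : Type*} [NormedRing R] [NormedSpace ℝ R] [IsScalarTower ℝ R R]

lemma eq_one_of_powers_near_one (x : R) (m : ℕ) (hm : 0 < m)
    (hx : x ^ m = 1) (h : ∀ k : ℕ, ‖x ^ k - 1‖ < 1) : x = 1 := by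
  by_contra hne
  have hd0 : x - 1 ≠ 0 := sub_ne_zero.mpr hne
  have hdpos : 0 < ‖x - 1‖ := norm_pos_iff.mpr hd0
  have hSd : (∑ j ∈ Finset.range m, x ^ j) * (x - 1) = 0 := by
    rw [geom_sum_mul, hx, sub_self]
  have key : (m : ℝ) • (x - 1) = ∑ j ∈ Finset.range m, ((1 : R) - x ^ j) * (x - 1) := by
    rw [← Finset.sum_mul]
    have : ∑ j ∈ Finset.range m, ((1 : R) - x ^ j) = (m : ℝ) • 1 - ∑ j ∈ Finset.range m, x ^ j := by
      rw [Finset.sum_sub_distrib]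
      simp [Finset.sum_const, ← Nat.cast_smul_eq_nsmul ℝ]
    rw [this, sub_mul, hSd, sub_zero, smul_mul_assoc, one_mul]
  have hlt : ‖(m : ℝ) • (x - 1)‖ < m * ‖x - 1‖ := by
    rw [key]
    calc ‖∑ j ∈ Finset.range m, ((1 : R) - x ^ j) * (x - 1)‖
        ≤ ∑ j ∈ Finset.range m, ‖((1 : R) - x ^ j) * (x - 1)‖ := norm_sum_le _ _
      _ < ∑ _j ∈ Finset.range m, ‖x - 1‖ := by
          apply Finset.sum_lt_sum_of_nonempty (Finset.nonempty_range_iff.mpr hm.ne')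
          intro j _
          calc ‖((1 : R) - x ^ j) * (x - 1)‖ ≤ ‖(1 : R) - x ^ j‖ * ‖x - 1‖ := norm_mul_le _ _
            _ < 1 * ‖x - 1‖ := by
                apply mul_lt_mul_of_pos_right _ hdpos
                rw [norm_sub_rev]; exact h j
            _ = ‖x - 1‖ := one_mul _
      _ = m * ‖x - 1‖ := by simp
  rw [norm_smul, Real.norm_natCast] at hlt
  exact lt_irrefl _ hlt

variable {G : Type*} [Group G] [Finite G] (v : G →* R)

lemma vdiff (a b : G) : ‖v (a⁻¹ * b) - 1‖ ≤ ‖v b - v a‖ * ‖v a⁻¹‖ := by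
  have : v (a⁻¹ * b) - 1 = v a⁻¹ * (v b - v a) := by
    rw [mul_sub, ← map_mul, ← map_mul, inv_mul_cancel, map_one]
  rw [this, mul_comm (‖v b - v a‖)]
  exact norm_mul_le _ _

lemma vcomm (a b : G) (hn : ∀ g : G, ‖v g‖ ≤ 1) :
    ‖v ⁅a, b⁆ - 1‖ ≤ 2 * ‖v a - 1‖ * ‖v b - 1‖ := by
  have key : v ⁅a, b⁆ - 1 = (v a * v b - v b * v a) * (v a⁻¹ * v b⁻¹) := by
    have h1 : v a * v a⁻¹ = 1 := by rw [← map_mul, mul_inv_cancel, map_one]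
    have h2 : v b * v b⁻¹ = 1 := by rw [← map_mul, mul_inv_cancel, map_one]
    rw [commutatorElement_def, map_mul, map_mul, map_mul]
    rw [sub_mul, mul_assoc (v b), ← mul_assoc (v a), h1, one_mul, h2, mul_assoc, mul_assoc]
  have h2 : v a * v b - v b * v a
      = (v a - 1) * (v b - 1) - (v b - 1) * (v a - 1) := by noncomm_ring
  rw [key]
  calc ‖(v a * v b - v b * v a) * (v a⁻¹ * v b⁻¹)‖
      ≤ ‖v a * v b - v b * v a‖ * ‖v a⁻¹ * v b⁻¹‖ := norm_mul_le _ _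
    _ ≤ ‖v a * v b - v b * v a‖ * 1 := by
        apply mul_le_mul_of_nonneg_left _ (norm_nonneg _)
        calc ‖v a⁻¹ * v b⁻¹‖ ≤ ‖v a⁻¹‖ * ‖v b⁻¹‖ := norm_mul_le _ _
          _ ≤ 1 * 1 := mul_le_mul (hn _) (hn _) (norm_nonneg _) zero_le_one
          _ = 1 := one_mul _
    _ = ‖v a * v b - v b * v a‖ := mul_one _
    _ ≤ ‖(v a - 1) * (v b - 1)‖ + ‖(v b - 1) * (v a - 1)‖ := by
        rw [h2]; exact norm_sub_le _ _
    _ ≤ ‖v a - 1‖ * ‖v b - 1‖ + ‖v b - 1‖ * ‖v a - 1‖ :=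
        add_le_add (norm_mul_le _ _) (norm_mul_le _ _)
    _ = 2 * ‖v a - 1‖ * ‖v b - 1‖ := by ring

/-- group identity: if `⁅a,b⁆` commutes with `b` then `⁅a, b^k⁆ = ⁅a,b⁆^k`. -/
lemma comm_pow (a b : G) (h : Commute ⁅a, b⁆ b) (k : ℕ) : ⁅a, b ^ k⁆ = ⁅a, b⁆ ^ k := by
  have hab : ∀ k : ℕ, a * b ^ k = ⁅a, b⁆ ^ k * b ^ k * a := by
    intro k
    induction k with
    | zero => simp
    | succ k ih =>
      have hc : a * b = ⁅a, b⁆ * b * a := by group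
      calc a * b ^ (k+1) = (a * b ^ k) * b := by rw [pow_succ, mul_assoc]
        _ = ⁅a, b⁆ ^ k * b ^ k * (a * b) := by rw [ih]; group
        _ = ⁅a, b⁆ ^ k * b ^ k * (⁅a, b⁆ * b * a) := by rw [hc]
        _ = ⁅a, b⁆ ^ k * (b ^ k * ⁅a, b⁆) * (b * a) := by group
        _ = ⁅a, b⁆ ^ k * (⁅a, b⁆ * b ^ k) * (b * a) := by rw [(h.pow_right k).symm.eq]
        _ = ⁅a, b⁆ ^ (k+1) * b ^ (k+1) * a := by rw [pow_succ, pow_succ]; group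
  have := hab k
  rw [commutatorElement_def]
  rw [this]
  group

lemma central_comm_eq_one (hn : ∀ g : G, ‖v g‖ ≤ 1) (hinj : Function.Injective v)
    (a b : G) (ha : ‖v a - 1‖ < 1/4) (h : Commute ⁅a, b⁆ b) : ⁅a, b⁆ = 1 := by
  have hpow : ∀ k : ℕ, ‖v ⁅a, b⁆ ^ k - 1‖ < 1 := by
    intro k
    have h1 : v ⁅a, b⁆ ^ k = v ⁅a, b ^ k⁆ := by rw [comm_pow a b h k, map_pow]
    have h2 : ‖v (b ^ k) - 1‖ ≤ 2 := by
      calc ‖v (b ^ k) - 1‖ ≤ ‖v (b ^ k)‖ + ‖(1 : R)‖ := norm_sub_le _ _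
        _ ≤ 1 + 1 := by
            refine add_le_add (hn _) ?_
            have := hn 1; rwa [map_one] at this
        _ = 2 := by norm_num
    calc ‖v ⁅a, b⁆ ^ k - 1‖ = ‖v ⁅a, b ^ k⁆ - 1‖ := by rw [h1]
      _ ≤ 2 * ‖v a - 1‖ * ‖v (b ^ k) - 1‖ := vcomm v a (b ^ k) hn
      _ ≤ 2 * ‖v a - 1‖ * 2 := by
          apply mul_le_mul_of_nonneg_left h2
          positivity
      _ < 2 * (1/4) * 2 := by
          have : 0 ≤ ‖v a - 1‖ := norm_nonneg _
          nlinarith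
      _ = 1 := by norm_num
  have hm : ⁅a, b⁆ ^ orderOf ⁅a, b⁆ = 1 := pow_orderOf_eq_one _
  have hmpos : 0 < orderOf ⁅a, b⁆ := orderOf_pos _
  have : v ⁅a, b⁆ = 1 := by
    apply eq_one_of_powers_near_one (v ⁅a, b⁆) (orderOf ⁅a, b⁆) hmpos
    · rw [← map_pow, hm, map_one]
    · exact hpow
  have : v ⁅a, b⁆ = v 1 := by rw [this, map_one]
  exact hinj this

lemma pairwise_commute (hn : ∀ g : G, ‖v g‖ ≤ 1) (hinj : Function.Injective v) :
    ∀ a b : G, ‖v a - 1‖ < 1/4 → ‖v b - 1‖ < 1/4 → Commute a b := by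
  by_contra hcon
  push_neg at hcon
  set s : Set (G × G) := {p | ‖v p.1 - 1‖ < 1/4 ∧ ‖v p.2 - 1‖ < 1/4 ∧ ¬Commute p.1 p.2} with hs
  obtain ⟨a, b, ha, hb, hab⟩ := hcon
  have hsne : s.Nonempty := ⟨(a, b), ha, hb, hab⟩
  obtain ⟨⟨a₀, b₀⟩, ⟨ha₀, hb₀, hab₀⟩, hmin⟩ :=
    Set.exists_min_image s (fun p => ‖v p.1 - 1‖ + ‖v p.2 - 1‖) (Set.toFinite s) hsne
  have hva : 0 < ‖v a₀ - 1‖ := by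
    rcases eq_or_lt_of_le (norm_nonneg (v a₀ - 1)) with h | h
    · exfalso
      have : v a₀ = v 1 := by
        have := (norm_eq_zero.mp h.symm)
        rw [sub_eq_zero] at this; rw [this, map_one]
      exact hab₀ (by rw [hinj this]; exact Commute.one_left _)
    · exact h
  have hvb : 0 < ‖v b₀ - 1‖ := by
    rcases eq_or_lt_of_le (norm_nonneg (v b₀ - 1)) with h | h
    · exfalso
      have : v b₀ = v 1 := by
        have := (norm_eq_zero.mp h.symm)
        rw [sub_eq_zero] at this; rw [this, map_one]
      exact hab₀ (by rw [hinj this]; exact Commute.one_right _)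
    · exact h
  set c := ⁅a₀, b₀⁆ with hc
  have hfc : ‖v c - 1‖ ≤ 2 * ‖v a₀ - 1‖ * ‖v b₀ - 1‖ := vcomm v a₀ b₀ hn
  have hclt : ‖v c - 1‖ < ‖v b₀ - 1‖ := by nlinarith
  have hclt4 : ‖v c - 1‖ < 1/4 := lt_trans hclt hb₀
  have hcomm : Commute c b₀ := by
    by_contra hnc
    have hmem : ((c, b₀) : G × G) ∈ s := ⟨hclt4, hb₀, hnc⟩
    have := hmin (c, b₀) hmem
    simp only at this
    nlinarith
  exact hab₀ (commutatorElement_eq_one_iff_commute.mp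
    (central_comm_eq_one v hn hinj a₀ b₀ ha₀ hcomm))

lemma jordan_abstract (hn : ∀ g : G, ‖v g‖ ≤ 1) (hinj : Function.Injective v)
    (C : ℕ) (t : Finset R) (hcard : t.card ≤ C)
    (hcover : Metric.closedBall (0 : R) 1 ⊆ ⋃ y ∈ t, Metric.ball y (1/8)) :
    ∃ B : Subgroup G, IsMulCommutative B ∧ B.index ≤ C := by
  classical
  set S : Set G := {g | ‖v g - 1‖ < 1/4} with hS
  refine ⟨Subgroup.closure S, ?_, ?_⟩
  · constructor; constructor
    rintro ⟨x, hx⟩ ⟨y, hy⟩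
    have : Commute x y := by
      induction hx, hy using Subgroup.closure_induction₂ with
      | mem a b ha hb => exact pairwise_commute v hn hinj a b ha hb
      | one_left b hb => exact Commute.one_left b
      | one_right a ha => exact Commute.one_right a
      | mul_left a b c _ _ _ h1 h2 => exact h1.mul_left h2
      | mul_right a b c _ _ _ h1 h2 => exact h1.mul_right h2
      | inv_left a b _ _ h => exact h.inv_left
      | inv_right a b _ _ h => exact h.inv_right
    exact Subtype.ext this
  · set B := Subgroup.closure S with hB
    have key : ∀ q : G ⧸ B, ∃ y ∈ t, v (Quotient.out q) ∈ Metric.ball y (1/8) := by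
      intro q
      have h1 : v (Quotient.out q) ∈ Metric.closedBall (0 : R) 1 := by
        rw [Metric.mem_closedBall, dist_zero_right]; exact hn _
      have := hcover h1
      simpa using this
    choose y hyt hymem using key
    have hsep : ∀ q q' : G ⧸ B, q ≠ q' →
        (1:ℝ)/4 ≤ dist (v (Quotient.out q)) (v (Quotient.out q')) := by
      intro q q' hne
      by_contra hlt
      push_neg at hlt
      have hmem : (Quotient.out q)⁻¹ * Quotient.out q' ∈ B := by
        apply Subgroup.subset_closure
        show ‖v ((Quotient.out q)⁻¹ * Quotient.out q') - 1‖ < 1/4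
        calc ‖v ((Quotient.out q)⁻¹ * Quotient.out q') - 1‖
            ≤ ‖v (Quotient.out q') - v (Quotient.out q)‖ * ‖v (Quotient.out q)⁻¹‖ :=
              vdiff v _ _
          _ ≤ ‖v (Quotient.out q') - v (Quotient.out q)‖ * 1 := by
              apply mul_le_mul_of_nonneg_left (hn _) (norm_nonneg _)
          _ = dist (v (Quotient.out q)) (v (Quotient.out q')) := by
              rw [mul_one, dist_eq_norm, norm_sub_rev]
          _ < 1/4 := hlt
      apply hne
      have := (QuotientGroup.eq (s := B)).mpr hmem
      rwa [QuotientGroup.out_eq', QuotientGroup.out_eq'] at this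
    have hinjF : Function.Injective (fun q : G ⧸ B => (⟨y q, hyt q⟩ : {z // z ∈ t})) := by
      intro q q' h
      by_contra hne
      have h1 := hymem q
      have h2 := hymem q'
      have : y q = y q' := congrArg Subtype.val h
      rw [this] at h1
      have : dist (v (Quotient.out q)) (v (Quotient.out q')) < 1/8 + 1/8 :=
        lt_of_le_of_lt (dist_triangle _ (y q') _)
          (add_lt_add (Metric.mem_ball.mp h1) (by rw [dist_comm]; exact Metric.mem_ball.mp h2))
      have := hsep q q' hne
      linarith
    calc (Subgroup.closure S).index = Nat.card (G ⧸ B) := rfl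
      _ ≤ Nat.card {z // z ∈ t} := Nat.card_le_card_of_injective _ hinjF
      _ = t.card := Nat.card_eq_finsetCard t
      _ ≤ C := hcard

end JordanCore

noncomputable section RepSection
open Matrix
open scoped MatrixOrder

lemma exists_rep (n : ℕ) (G : Subgroup (Matrix.GeneralLinearGroup (Fin n) ℝ)) [Finite G] :
    ∃ v : G →* (EuclideanSpace ℝ (Fin n) →L[ℝ] EuclideanSpace ℝ (Fin n)),
      Function.Injective v ∧ ∀ g : G, ‖v g‖ ≤ 1 := by
  classical
  haveI := Fintype.ofFinite G
  set E := EuclideanSpace ℝ (Fin n)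
  set M : G → Matrix (Fin n) (Fin n) ℝ := fun g => ((g : Matrix.GeneralLinearGroup (Fin n) ℝ) : Matrix (Fin n) (Fin n) ℝ)
    with hM
  have hMmul : ∀ g h : G, M (g * h) = M g * M h := by intro g h; simp [hM]
  have hMone : M 1 = 1 := by simp [hM]
  have hMinj : Function.Injective M := by
    intro g h hgh
    ext i j
    exact congrFun (congrFun hgh i) j
  set T : Matrix (Fin n) (Fin n) ℝ := ∑ g : G, (M g)ᵀ * M g with hT
  -- quadratic form evaluation
  have hquad : ∀ x : Fin n → ℝ, x ⬝ᵥ T *ᵥ x = ∑ g : G, (M g *ᵥ x) ⬝ᵥ (M g *ᵥ x) := by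
    intro x
    have h0 := map_sum
      (⟨⟨fun A : Matrix (Fin n) (Fin n) ℝ => x ⬝ᵥ A *ᵥ x, by
          simp [Matrix.zero_mulVec, dotProduct_zero]⟩, fun A B => by
          simp [Matrix.add_mulVec, dotProduct_add]⟩ : Matrix (Fin n) (Fin n) ℝ →+ ℝ)
      (fun g : G => (M g)ᵀ * M g) Finset.univ
    simp only [AddMonoidHom.coe_mk, ZeroHom.coe_mk] at h0
    rw [hT, h0]
    congr 1
    ext g
    rw [← Matrix.mulVec_mulVec, Matrix.dotProduct_mulVec, Matrix.vecMul_transpose]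
  have hTpos : T.PosDef := by
    rw [Matrix.posDef_iff_dotProduct_mulVec]
    constructor
    · rw [Matrix.IsHermitian, Matrix.conjTranspose_eq_transpose_of_trivial, hT, Matrix.transpose_sum]
      congr 1
      ext g
      rw [Matrix.transpose_mul, Matrix.transpose_transpose]
    · intro x hx
      have hsx : star x = x := by simp
      rw [hsx, hquad]
      apply Finset.sum_pos'
      · intro g _
        exact (dotProduct_self_star_nonneg _).trans_eq (by rw [star_trivial])
      · refine ⟨1, Finset.mem_univ _, ?_⟩
        rw [hMone, Matrix.one_mulVec]
        rcases (dotProduct_self_star_nonneg x).lt_or_eq with h | h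
        · rwa [star_trivial] at h
        · exact absurd (dotProduct_self_star_eq_zero.mp h.symm) hx
  -- invariance
  have hinvar : ∀ g : G, (M g)ᵀ * T * M g = T := by
    intro g
    rw [hT, Finset.mul_sum, Finset.sum_mul]
    rw [← Equiv.sum_comp (Equiv.mulRight g) (fun h => (M h)ᵀ * M h)]
    congr 1
    ext h
    simp only [Equiv.coe_mulRight]
    rw [hMmul, Matrix.transpose_mul]
    noncomm_ring
  set S : Matrix (Fin n) (Fin n) ℝ := CFC.sqrt T with hS
  have hSsq : S * S = T := CFC.sqrt_mul_sqrt_self T hTpos.posSemidef.nonneg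
  have hSH : Sᵀ = S := by
    have := (CFC.sqrt_nonneg T).posSemidef.isHermitian
    rwa [Matrix.IsHermitian, Matrix.conjTranspose_eq_transpose_of_trivial] at this
  have hSdet : IsUnit S.det := by
    have hTdet : 0 < T.det := hTpos.det_pos
    rw [← hSsq, Matrix.det_mul] at hTdet
    have : S.det ≠ 0 := by intro h; rw [h] at hTdet; simp at hTdet
    exact isUnit_iff_ne_zero.mpr this
  set SU : (Matrix (Fin n) (Fin n) ℝ)ˣ := S.nonsingInvUnit hSdet with hSU
  have hSUval : (SU : Matrix (Fin n) (Fin n) ℝ) = S := rfl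
  have hSUinv : ((SU⁻¹ : (Matrix (Fin n) (Fin n) ℝ)ˣ) : Matrix (Fin n) (Fin n) ℝ) = S⁻¹ := rfl
  have hcancel : ∀ k : G, S⁻¹ * (S * M k * S⁻¹) * S = M k := by
    intro k
    calc S⁻¹ * (S * M k * S⁻¹) * S = (S⁻¹ * S) * M k * (S⁻¹ * S) := by noncomm_ring
      _ = M k := by rw [Matrix.nonsing_inv_mul S hSdet]; noncomm_ring
  -- the conjugated matrices are orthogonal
  have horth : ∀ g : G, (S * M g * S⁻¹)ᴴ * (S * M g * S⁻¹) = 1 := by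
    intro g
    rw [Matrix.conjTranspose_eq_transpose_of_trivial]
    rw [Matrix.transpose_mul, Matrix.transpose_mul, hSH, Matrix.transpose_nonsing_inv, hSH]
    calc S⁻¹ * ((M g)ᵀ * S) * (S * M g * S⁻¹)
        = S⁻¹ * ((M g)ᵀ * (S * S) * M g) * S⁻¹ := by noncomm_ring
      _ = S⁻¹ * T * S⁻¹ := by rw [hSsq, hinvar]
      _ = S⁻¹ * (S * S) * S⁻¹ := by rw [hSsq]
      _ = (S⁻¹ * S) * (S * S⁻¹) := by noncomm_ring
      _ = 1 := by rw [Matrix.nonsing_inv_mul S hSdet, Matrix.mul_nonsing_inv S hSdet, one_mul]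
  -- build the monoid hom
  set ψ : Matrix (Fin n) (Fin n) ℝ →* (E →L[ℝ] E) :=
    { toFun := fun A => Matrix.toEuclideanCLM (𝕜 := ℝ) A
      map_one' := _root_.map_one _
      map_mul' := fun A B => _root_.map_mul _ A B } with hψ
  set φ : G →* (Matrix (Fin n) (Fin n) ℝ)ˣ :=
    ((MulAut.conj SU).toMonoidHom).comp G.subtype with hφ
  set v : G →* (E →L[ℝ] E) := ψ.comp ((Units.coeHom _).comp φ) with hv
  have harg : ∀ g : G,
      ((φ g : (Matrix (Fin n) (Fin n) ℝ)ˣ) : Matrix (Fin n) (Fin n) ℝ) = S * M g * S⁻¹ := by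
    intro g
    show ((SU * (g : Matrix.GeneralLinearGroup (Fin n) ℝ) * SU⁻¹ : (Matrix (Fin n) (Fin n) ℝ)ˣ) :
      Matrix (Fin n) (Fin n) ℝ) = S * M g * S⁻¹
    rw [Units.val_mul, Units.val_mul, hSUval, hSUinv]
  have hvval : ∀ g : G, v g = Matrix.toEuclideanCLM (𝕜 := ℝ) (S * M g * S⁻¹) := by
    intro g
    rw [← harg g]
    rfl
  refine ⟨v, ?_, ?_⟩
  · -- injectivity
    intro g h hgh
    rw [hvval, hvval] at hgh
    have h1 := (Matrix.toEuclideanCLM (𝕜 := ℝ) (n := Fin n)).injective hgh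
    apply hMinj
    have h2 := congrArg (fun A => S⁻¹ * A * S) h1
    simpa only [hcancel] using h2
  · -- norm bound
    intro g
    have hstar : star (v g) * v g = 1 := by
      rw [hvval, ← map_star, ← _root_.map_mul, Matrix.star_eq_conjTranspose, horth,
        _root_.map_one]
    have hiso : ∀ x : E, ‖v g x‖ = ‖x‖ := by
      intro x
      have h2 : ContinuousLinearMap.adjoint (v g) ((v g) x) = x := by
        have h3 : (star (v g) * v g) x = (1 : E →L[ℝ] E) x := by rw [hstar]
        simpa [ContinuousLinearMap.star_eq_adjoint, ContinuousLinearMap.mul_apply] using h3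
      have h4 := ContinuousLinearMap.adjoint_inner_left (v g) x ((v g) x)
      rw [h2] at h4
      rw [norm_eq_sqrt_real_inner, norm_eq_sqrt_real_inner, ← h4]
    apply ContinuousLinearMap.opNorm_le_bound _ zero_le_one
    intro x
    rw [hiso x, one_mul]

end RepSection

/-- **Jordan's theorem.** For every natural number `n` there is a constant `C` such that
every finite subgroup `G` of `GL(n, ℝ)` contains an abelian subgroup `A` with
`[G : A] ≤ C`. -/
theorem stmt_10 (n : ℕ) :
    ∃ C : ℕ, ∀ G : Subgroup (Matrix.GeneralLinearGroup (Fin n) ℝ), Finite G →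
      ∃ A : Subgroup G, IsMulCommutative A ∧ A.index ≤ C := by
  classical
  obtain ⟨t, -, htf, hcov⟩ :=
    (isCompact_closedBall (0 : EuclideanSpace ℝ (Fin n) →L[ℝ] EuclideanSpace ℝ (Fin n)) 1
      ).finite_cover_balls (e := 1/8) (by norm_num)
  refine ⟨htf.toFinset.card, ?_⟩
  intro G hG
  haveI : Finite G := hG
  haveI : IsScalarTower ℝ (EuclideanSpace ℝ (Fin n) →L[ℝ] EuclideanSpace ℝ (Fin n))
      (EuclideanSpace ℝ (Fin n) →L[ℝ] EuclideanSpace ℝ (Fin n)) := ⟨fun r a b => by ext x; rfl⟩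
  obtain ⟨v, hinj, hn⟩ := exists_rep n G
  apply jordan_abstract v hn hinj _ htf.toFinset le_rfl
  intro x hx
  rcases Set.mem_iUnion₂.mp (hcov hx) with ⟨y, hy, hmem⟩
  exact Set.mem_iUnion₂.mpr ⟨y, htf.mem_toFinset.mpr hy, hmem⟩
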